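/- Let n ≥ 1, let 0 < α < β < π/2, and set λ = cos β / cos α and μ = tan α / tan β. Define Ψ : ℝ^n → ℝ^n by Ψ(x_1,…,x_n) = (λx_1, …, λx_{n-1}, λμ x_n + √((1−λ²)(1−μ²))). Then: (a) Ψ is an affine bijection with Ψ(B_n) ⊆ B_n; (b) if x ∈ E_{n,α} then Ψ(x) ∈ E_{n,β}; (c) if x, y ∈ E_{n,α} then ‖Ψ(x) − Ψ(y)‖ = λ‖x − y‖; (d) if x ∈ B_n and Ψ(x) ∈ S^{n-1}, then x ∈ E_{n,α}. -/

import Mathlib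

open Metric Set Real

/-- The circle of latitude `θ` on the unit sphere of `ℝ^{n+1}`. -/
def latitudeCircle (n : ℕ) (θ : ℝ) : Set (EuclideanSpace ℝ (Fin (n + 1))) :=
  {x | x ∈ sphere (0 : EuclideanSpace ℝ (Fin (n + 1))) 1 ∧ x (Fin.last n) = Real.sin θ}

set_option maxHeartbeats 1000000 in
/-- Lemma on the map sending the latitude-`α` circle to the latitude-`β` circle:
with `λ = cos β / cos α` and `μ = tan α / tan β`, the map
`Ψ(x_1,…,x_{n+1}) = (λx_1, …, λx_n, λμ x_{n+1} + √((1−λ²)(1−μ²)))` is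
(a) an affine bijection preserving the closed unit ball;
(b) sends `E_{α}` to `E_{β}`; (c) scales distances on `E_{α}` by `λ`;
(d) points of the ball sent to the sphere lie on `E_{α}`. -/
theorem latitude_map_properties
    (n : ℕ) (α β : ℝ) (hα : 0 < α) (hαβ : α < β) (hβ : β < π / 2)
    (Ψ : EuclideanSpace ℝ (Fin (n + 1)) → EuclideanSpace ℝ (Fin (n + 1)))
    (hΨ : ∀ x : EuclideanSpace ℝ (Fin (n + 1)), ∀ i : Fin (n + 1),
      Ψ x i = if i = Fin.last n then
          (Real.cos β / Real.cos α) * (Real.tan α / Real.tan β) * x (Fin.last n) +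
            Real.sqrt ((1 - (Real.cos β / Real.cos α) ^ 2) *
              (1 - (Real.tan α / Real.tan β) ^ 2))
        else (Real.cos β / Real.cos α) * x i) :
    ((∃ A : EuclideanSpace ℝ (Fin (n + 1)) →ᵃ[ℝ] EuclideanSpace ℝ (Fin (n + 1)),
        ⇑A = Ψ) ∧ Function.Bijective Ψ ∧
      (∀ x ∈ closedBall (0 : EuclideanSpace ℝ (Fin (n + 1))) 1, Ψ x ∈ closedBall 0 1)) ∧
    (∀ x ∈ latitudeCircle n α, Ψ x ∈ latitudeCircle n β) ∧
    (∀ x ∈ latitudeCircle n α, ∀ y ∈ latitudeCircle n α,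
      ‖Ψ x - Ψ y‖ = (Real.cos β / Real.cos α) * ‖x - y‖) ∧
    (∀ x ∈ closedBall (0 : EuclideanSpace ℝ (Fin (n + 1))) 1,
      Ψ x ∈ sphere (0 : EuclideanSpace ℝ (Fin (n + 1))) 1 → x ∈ latitudeCircle n α) := by
  have hpi := pi_pos
  set l := Real.cos β / Real.cos α with hl
  set m := Real.tan α / Real.tan β with hm
  set c := Real.sqrt ((1 - l ^ 2) * (1 - m ^ 2)) with hcdef
  set sa := Real.sin α with hsa'
  set sb := Real.sin β with hsb'
  set ca := Real.cos α with hca'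
  set cb := Real.cos β with hcb'
  have hca : 0 < ca := Real.cos_pos_of_mem_Ioo ⟨by linarith, by linarith⟩
  have hcb : 0 < cb := Real.cos_pos_of_mem_Ioo ⟨by linarith, by linarith⟩
  have hsa : 0 < sa := Real.sin_pos_of_pos_of_lt_pi hα (by linarith)
  have hsb : 0 < sb := Real.sin_pos_of_pos_of_lt_pi (by linarith) (by linarith)
  have hclt : cb < ca := Real.cos_lt_cos_of_nonneg_of_le_pi (by linarith) (by linarith) hαβ
  have hslt : sa < sb := Real.sin_lt_sin_of_lt_of_le_pi_div_two (by linarith) (by linarith) hαβ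
  have htlt : Real.tan α < Real.tan β :=
    Real.tan_lt_tan_of_nonneg_of_lt_pi_div_two (le_of_lt hα) hβ hαβ
  have hta : 0 < Real.tan α := Real.tan_pos_of_pos_of_lt_pi_div_two hα (by linarith)
  have pa : sa ^ 2 + ca ^ 2 = 1 := Real.sin_sq_add_cos_sq α
  have pb : sb ^ 2 + cb ^ 2 = 1 := Real.sin_sq_add_cos_sq β
  have hl0 : 0 < l := div_pos hcb hca
  have hl1 : l < 1 := (div_lt_one hca).2 hclt
  have hm0 : 0 < m := div_pos hta (hta.trans htlt)
  have hm1 : m < 1 := (div_lt_one (hta.trans htlt)).2 htlt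
  have hm' : m = sa * cb / (ca * sb) := by
    rw [hm, Real.tan_eq_sin_div_cos, Real.tan_eq_sin_div_cos, ← hsa', ← hsb', ← hca', ← hcb']
    field_simp
  have h1l : 1 - l ^ 2 = (sb ^ 2 - sa ^ 2) / ca ^ 2 := by
    rw [hl]; field_simp; linarith [pa, pb]
  have h1m : 1 - m ^ 2 = (sb ^ 2 - sa ^ 2) / (ca ^ 2 * sb ^ 2) := by
    rw [hm']; field_simp; linear_combination sb^2*pa - sa^2*pb
  have hss : 0 < sb ^ 2 - sa ^ 2 :=
    sub_pos.2 (pow_lt_pow_left₀ hslt hsa.le two_ne_zero)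
  have hc_eq : c = (sb ^ 2 - sa ^ 2) / (ca ^ 2 * sb) := by
    rw [hcdef, h1l, h1m,
      show (sb ^ 2 - sa ^ 2) / ca ^ 2 * ((sb ^ 2 - sa ^ 2) / (ca ^ 2 * sb ^ 2))
        = ((sb ^ 2 - sa ^ 2) / (ca ^ 2 * sb)) ^ 2 by field_simp]
    exact Real.sqrt_sq (by positivity)
  have hc0 : 0 < c := by rw [hc_eq]; positivity
  have h1m' : (0:ℝ) < 1 - m ^ 2 := by
    have := pow_lt_pow_left₀ hm1 hm0.le (two_ne_zero); simpa using sub_pos.2 this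
  have h1l' : (0:ℝ) < 1 - l ^ 2 := by
    have := pow_lt_pow_left₀ hl1 hl0.le (two_ne_zero); simpa using sub_pos.2 this
  have hA : c ^ 2 = (1 - l ^ 2) * (1 - m ^ 2) :=
    Real.sq_sqrt (mul_nonneg h1l'.le h1m'.le)
  have hB : m * c = l * (1 - m ^ 2) * sa := by
    rw [hc_eq, h1m, hm', hl]; field_simp
  have hC : m ^ 2 * (1 - l ^ 2) = l ^ 2 * (1 - m ^ 2) * sa ^ 2 := by
    have h2 : m ^ 2 * c ^ 2 = (l * (1 - m ^ 2) * sa) ^ 2 := by rw [← hB]; ring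
    have := mul_right_cancel₀ (ne_of_gt h1m')
      (show m ^ 2 * (1 - l ^ 2) * (1 - m ^ 2) = l ^ 2 * (1 - m ^ 2) * sa ^ 2 * (1 - m ^ 2) by
        linear_combination h2 - m ^ 2 * hA)
    exact this
  have hKey : ∀ S t : ℝ, l ^ 2 * S + (l * m * t + c) ^ 2
      = 1 - l ^ 2 * (1 - m ^ 2) * (t - sa) ^ 2 - l ^ 2 * (1 - t ^ 2 - S) := by
    intro S t
    linear_combination hA + (2 * l * t) * hB - hC
  have hblast : l * m * sa + c = sb := by
    rw [hc_eq, hm', hl]; field_simp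
    linear_combination sa ^ 2 * pb - sb ^ 2 * pa
  have hlcb : l ^ 2 * ca ^ 2 = cb ^ 2 := by rw [hl]; field_simp
  -- norm computations
  have normsq : ∀ z : EuclideanSpace ℝ (Fin (n + 1)), ‖z‖ ^ 2 = ∑ i, (z i) ^ 2 := by
    intro z
    rw [EuclideanSpace.norm_eq, Real.sq_sqrt (by positivity)]
    simp [Real.norm_eq_abs, sq_abs]
  have sum_split : ∀ z : EuclideanSpace ℝ (Fin (n + 1)),
      ∑ i, (z i) ^ 2 = (∑ i : Fin n, (z i.castSucc) ^ 2) + (z (Fin.last n)) ^ 2 :=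
    fun z => Fin.sum_univ_castSucc (fun i => (z i) ^ 2)
  have hΨcast : ∀ (x : EuclideanSpace ℝ (Fin (n + 1))) (i : Fin n),
      Ψ x i.castSucc = l * x i.castSucc := by
    intro x i
    rw [hΨ x i.castSucc, if_neg (Fin.ne_of_lt (Fin.castSucc_lt_last i))]
  have hΨlast : ∀ x : EuclideanSpace ℝ (Fin (n + 1)),
      Ψ x (Fin.last n) = l * m * x (Fin.last n) + c := by
    intro x; rw [hΨ x (Fin.last n), if_pos rfl]
  have hΨnorm : ∀ x : EuclideanSpace ℝ (Fin (n + 1)),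
      ‖Ψ x‖ ^ 2 = l ^ 2 * (∑ i : Fin n, (x i.castSucc) ^ 2)
        + (l * m * x (Fin.last n) + c) ^ 2 := by
    intro x
    rw [normsq, sum_split, hΨlast, Finset.mul_sum]
    congr 1
    refine Finset.sum_congr rfl fun i _ => ?_
    rw [hΨcast]; ring
  have hxnorm : ∀ x : EuclideanSpace ℝ (Fin (n + 1)),
      ‖x‖ ^ 2 = (∑ i : Fin n, (x i.castSucc) ^ 2) + (x (Fin.last n)) ^ 2 := by
    intro x; rw [normsq, sum_split]
  -- ball preservation
  have hball : ∀ x : EuclideanSpace ℝ (Fin (n + 1)), ‖x‖ ≤ 1 → ‖Ψ x‖ ≤ 1 := by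
    intro x hx
    have h1 : ‖x‖ ^ 2 ≤ 1 := pow_le_one₀ (norm_nonneg x) hx
    have h2 := hΨnorm x
    rw [hKey] at h2
    have h3 : 1 - (x (Fin.last n)) ^ 2 - (∑ i : Fin n, (x i.castSucc) ^ 2)
        = 1 - ‖x‖ ^ 2 := by rw [hxnorm]; ring
    rw [h3] at h2
    have e1 : 0 ≤ l ^ 2 * (1 - m ^ 2) * (x (Fin.last n) - sa) ^ 2 :=
      mul_nonneg (mul_nonneg (sq_nonneg l) h1m'.le) (sq_nonneg _)
    have e2 : 0 ≤ l ^ 2 * (1 - ‖x‖ ^ 2) := mul_nonneg (sq_nonneg l) (by linarith)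
    have h4 : ‖Ψ x‖ ^ 2 ≤ 1 := by linarith
    by_contra hcon
    push_neg at hcon
    have := pow_lt_pow_left₀ hcon (by norm_num : (0:ℝ) ≤ 1) (two_ne_zero)
    rw [one_pow] at this; linarith
  -- part (b)
  have hpartb : ∀ x ∈ latitudeCircle n α, Ψ x ∈ latitudeCircle n β := by
    intro x hx
    obtain ⟨hxs, hxl⟩ := hx
    rw [mem_sphere_zero_iff_norm] at hxs
    have hS : (∑ i : Fin n, (x i.castSucc) ^ 2) = ca ^ 2 := by
      have h0 := hxnorm x
      rw [hxs, hxl] at h0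
      have : (1:ℝ) ^ 2 = 1 := one_pow 2
      linarith [pa]
    constructor
    · rw [mem_sphere_zero_iff_norm]
      have h2 : ‖Ψ x‖ ^ 2 = 1 := by
        rw [hΨnorm, hS, hxl, hblast]
        linarith [hlcb, pb]
      exact (sq_eq_sq₀ (norm_nonneg _) zero_le_one).1 (by rw [h2]; norm_num)
    · rw [hΨlast, hxl, hblast]
  refine ⟨⟨?_, ?_, ?_⟩, hpartb, ?_, ?_⟩
  · -- affine map
    refine ⟨{ toFun := Ψ
              linear :=
                { toFun := fun x => WithLp.toLp 2 (fun i =>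
                    (if i = Fin.last n then l * m else l) * x i : Fin (n+1) → ℝ)
                  map_add' := by
                    intro x y; ext i
                    show (if i = Fin.last n then l * m else l) * (x + y) i = _
                    simp only [PiLp.add_apply]
                    split_ifs <;> ring
                  map_smul' := by
                    intro r x; ext i
                    show (if i = Fin.last n then l * m else l) * (r • x) i = _
                    simp only [PiLp.smul_apply, smul_eq_mul, RingHom.id_apply]
                    split_ifs <;> ring }
              map_vadd' := ?_ }, rfl⟩
    intro p v
    ext i
    show Ψ (v + p) i = (if i = Fin.last n then l * m else l) * v i + Ψ p i
    rw [hΨ, hΨ]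
    split_ifs with h
    · subst h; simp only [PiLp.add_apply]; ring
    · simp only [PiLp.add_apply]; ring
  · -- bijective
    have hlm : l * m ≠ 0 := by positivity
    have hl' : l ≠ 0 := ne_of_gt hl0
    refine Function.bijective_iff_has_inverse.2
      ⟨fun y => WithLp.toLp 2 (fun i => if i = Fin.last n then (y i - c) / (l * m) else y i / l :
          Fin (n+1) → ℝ), ?_, ?_⟩
    · intro x
      ext i
      show (if i = Fin.last n then (Ψ x i - c) / (l * m) else Ψ x i / l) = x i
      rw [hΨ]
      by_cases h : i = Fin.last n
      · rw [if_pos h, if_pos h, h]; field_simp; ring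
      · rw [if_neg h, if_neg h]; field_simp
    · intro y
      ext i
      rw [hΨ]
      by_cases h : i = Fin.last n
      · rw [if_pos h]
        show l * m * ((if Fin.last n = Fin.last n then (y (Fin.last n) - c) / (l * m)
            else y (Fin.last n) / l)) + c = y i
        rw [if_pos rfl, h]; field_simp; ring
      · rw [if_neg h]
        show l * (if i = Fin.last n then (y i - c) / (l * m) else y i / l) = y i
        rw [if_neg h]; field_simp
  · -- ball
    intro x hx
    rw [mem_closedBall, dist_zero_right] at hx ⊢
    exact hball x hx
  · -- part (c)
    intro x hx y hy
    obtain ⟨-, hxl⟩ := hx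
    obtain ⟨-, hyl⟩ := hy
    have hsub : ∀ i : Fin (n + 1), (Ψ x - Ψ y) i = l * ((x - y) i) := by
      intro i
      simp only [PiLp.sub_apply]
      rw [hΨ, hΨ]
      split_ifs with h
      · subst h; rw [hxl, hyl]; ring
      · ring
    have h2 : ‖Ψ x - Ψ y‖ ^ 2 = l ^ 2 * ‖x - y‖ ^ 2 := by
      rw [normsq, normsq, Finset.mul_sum]
      refine Finset.sum_congr rfl fun i _ => ?_
      rw [hsub]; ring
    exact (sq_eq_sq₀ (norm_nonneg _) (mul_nonneg hl0.le (norm_nonneg _))).1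
      (by rw [mul_pow]; exact h2)
  · -- part (d)
    intro x hx hs
    rw [mem_closedBall, dist_zero_right] at hx
    rw [mem_sphere_zero_iff_norm] at hs
    have h2 : ‖Ψ x‖ ^ 2 = 1 := by rw [hs]; norm_num
    rw [hΨnorm, hKey] at h2
    have h3 : 1 - (x (Fin.last n)) ^ 2 - (∑ i : Fin n, (x i.castSucc) ^ 2)
        = 1 - ‖x‖ ^ 2 := by rw [hxnorm]; ring
    rw [h3] at h2
    have hn1 : (0:ℝ) ≤ 1 - ‖x‖ ^ 2 := by
      have h6 : ‖x‖ ^ 2 ≤ 1 := pow_le_one₀ (norm_nonneg x) hx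
      linarith
    have e1 : 0 ≤ l ^ 2 * (1 - m ^ 2) * (x (Fin.last n) - sa) ^ 2 :=
      mul_nonneg (mul_nonneg (sq_nonneg l) h1m'.le) (sq_nonneg _)
    have e2 : 0 ≤ l ^ 2 * (1 - ‖x‖ ^ 2) := mul_nonneg (sq_nonneg l) hn1
    have hz1 : l ^ 2 * (1 - m ^ 2) * (x (Fin.last n) - sa) ^ 2 = 0 := by linarith
    have hz2 : l ^ 2 * (1 - ‖x‖ ^ 2) = 0 := by linarith
    have hl2 : (0:ℝ) < l ^ 2 := by positivity
    have ht : x (Fin.last n) = sa := by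
      have := (mul_eq_zero.1 hz1).resolve_left
        (ne_of_gt (mul_pos hl2 h1m'))
      have := pow_eq_zero_iff (n := 2) (by norm_num) |>.1 this
      linarith
    have hnx : ‖x‖ = 1 := by
      have h5 : ‖x‖ ^ 2 = 1 := by
        have := (mul_eq_zero.1 hz2).resolve_left (ne_of_gt hl2)
        linarith
      exact (sq_eq_sq₀ (norm_nonneg _) zero_le_one).1 (by rw [h5]; norm_num)
    exact ⟨mem_sphere_zero_iff_norm.2 hnx, ht⟩
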